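/- Let (J_i, v_i) be i.i.d. with v_i uniform on the unit sphere S^{d−1}, independent of J_i, and J_i Mittag-Leffler distributed with P(J > t) = E_α(−t^α), α ∈ (0,1). Then for λ ≥ 0 and ξ ∈ R^d, E[exp(n^{−1/α}(−λ τ_n + iξ·Y(n)))] → exp(−∫_{S^{d−1}} (λ − iξ·v)^α μ(dv)) as n → ∞, where τ_n = J_1+⋯+J_n, Y(n) = J_1 v_1 + ⋯ + J_n v_n and μ is the uniform probability measure on S^{d−1}. -/

import Mathlib

open MeasureTheory Filter ProbabilityTheory
open scoped RealInnerProductSpace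

lemma aux_measurable_cpow_const {s : ℂ} (hs : s ≠ 0) :
    Measurable fun z : ℂ => z ^ s := by
  have h : (fun z : ℂ => z ^ s) =
      fun z => if z = 0 then 0 else Complex.exp (Complex.log z * s) := by
    funext z
    by_cases hz : z = 0
    · simp [hz, Complex.zero_cpow hs]
    · simp [Complex.cpow_def_of_ne_zero hz, hz]
  rw [h]
  exact Measurable.ite (MeasurableSet.singleton 0) measurable_const
    (Complex.measurable_log.mul_const s).cexp

lemma aux_ofReal_mul_cpow {r : ℝ} (hr : 0 < r) (w : ℂ) {s : ℂ} (hs : s ≠ 0) :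
    ((r : ℂ) * w) ^ s = (r : ℂ) ^ s * w ^ s := by
  rcases eq_or_ne w 0 with rfl | hw
  · simp [Complex.zero_cpow hs]
  have hr' : (r : ℂ) ≠ 0 := Complex.ofReal_ne_zero.mpr hr.ne'
  rw [Complex.cpow_def_of_ne_zero (mul_ne_zero hr' hw), Complex.log_ofReal_mul hr hw,
    Complex.cpow_def_of_ne_zero hr', Complex.cpow_def_of_ne_zero hw,
    ← Complex.ofReal_log hr.le, add_mul, Complex.exp_add]

lemma aux_re_cpow_nonneg {w : ℂ} (hw : 0 ≤ w.re) {a : ℝ} (ha0 : 0 ≤ a) (ha1 : a ≤ 1) :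
    0 ≤ (w ^ (a : ℂ)).re := by
  rcases eq_or_ne w 0 with rfl | hw0
  · rcases eq_or_ne (a : ℂ) 0 with h | h
    · simp [h]
    · simp [Complex.zero_cpow h]
  rw [Complex.cpow_def_of_ne_zero hw0, Complex.exp_re]
  apply mul_nonneg (Real.exp_pos _).le
  apply Real.cos_nonneg_of_mem_Icc
  have harg : |w.arg| ≤ Real.pi / 2 := Complex.abs_arg_le_pi_div_two_iff.mpr hw
  have him : (Complex.log w * (a : ℂ)).im = w.arg * a := by
    simp [Complex.mul_im, Complex.log_im]
  rw [him]
  have habs : |w.arg * a| ≤ Real.pi / 2 := by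
    rw [abs_mul, abs_of_nonneg ha0]
    calc |w.arg| * a ≤ (Real.pi / 2) * 1 :=
      mul_le_mul harg ha1 ha0 (by positivity)
    _ = Real.pi / 2 := mul_one _
  rw [abs_le] at habs
  exact ⟨habs.1, habs.2⟩

lemma aux_tendsto_pow_exp {u : ℕ → ℂ} {l : ℂ} (hu : Tendsto u atTop (nhds l)) :
    Tendsto (fun n : ℕ => (1 + u n / n) ^ n) atTop (nhds (Complex.exp l)) := by
  have ht : Tendsto (fun n : ℕ => u n / n) atTop (nhds 0) := by
    rw [tendsto_zero_iff_norm_tendsto_zero]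
    have h1 : Tendsto (fun n : ℕ => ‖u n‖ * (1 / (n : ℝ))) atTop (nhds (‖l‖ * 0)) :=
      (hu.norm).mul tendsto_one_div_atTop_nhds_zero_nat
    rw [mul_zero] at h1
    refine h1.congr' ?_
    filter_upwards [eventually_ge_atTop 1] with n hn
    rw [norm_div, Complex.norm_natCast]; ring
  -- the auxiliary function log(1+z)/z
  set g : ℂ → ℂ := fun z => if z = 0 then 1 else Complex.log (1 + z) / z with hg_def
  have hgl : Tendsto g (nhds 0) (nhds 1) := by
    have hderiv : HasDerivAt (fun z : ℂ => Complex.log (1 + z)) 1 0 := by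
      have h1 : (1 : ℂ) + 0 ∈ Complex.slitPlane := by
        rw [add_zero]; exact Complex.one_mem_slitPlane
      have := (Complex.hasDerivAt_log h1).comp 0 ((hasDerivAt_id (0 : ℂ)).const_add 1)
      simp at this; exact this
    have hslope := hasDerivAt_iff_tendsto_slope.mp hderiv
    have hgen : Tendsto g (nhdsWithin 0 {(0 : ℂ)}ᶜ) (nhds 1) := by
      refine hslope.congr' ?_
      filter_upwards [self_mem_nhdsWithin] with z hz
      have hz0 : z ≠ 0 := hz
      simp [slope, hg_def, hz0, Complex.log_one, sub_zero]
      ring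
    rw [← nhdsNE_sup_pure (0 : ℂ)]
    rw [tendsto_sup]
    refine ⟨hgen, ?_⟩
    have : g 0 = 1 := by simp [hg_def]
    rw [tendsto_pure_left]
    intro s hs
    rw [this]
    exact mem_of_mem_nhds hs
  have hlog : Tendsto (fun n : ℕ => (n : ℂ) * Complex.log (1 + u n / n)) atTop (nhds l) := by
    have h2 : Tendsto (fun n : ℕ => u n * g (u n / n)) atTop (nhds (l * 1)) :=
      hu.mul (hgl.comp ht)
    rw [mul_one] at h2
    refine h2.congr' ?_
    filter_upwards [eventually_ge_atTop 1] with n hn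
    have hn0 : (n : ℂ) ≠ 0 := Nat.cast_ne_zero.mpr (by omega)
    by_cases h : u n / n = 0
    · have hun : u n = 0 := by
        field_simp at h; simpa using h
      simp [h, hun, hg_def]
    · have hun0 : u n ≠ 0 := by
        intro h0; exact h (by rw [h0]; simp)
      simp only [hg_def, if_neg h]
      field_simp
  have hexp := hlog.cexp
  refine hexp.congr' ?_
  have h3 : Tendsto (fun n : ℕ => ‖u n / (n : ℂ)‖) atTop (nhds 0) :=
    (tendsto_zero_iff_norm_tendsto_zero.mp ht)
  filter_upwards [h3.eventually (eventually_lt_nhds zero_lt_one)] with n hn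
  have hne : (1 : ℂ) + u n / n ≠ 0 := by
    intro h
    have : u n / n = -1 := by linear_combination h
    rw [this] at hn
    simp at hn
  rw [← Complex.exp_log hne, ← Complex.exp_nat_mul, Complex.exp_log hne]


lemma aux_indep_integral_mul {Ω : Type*} [MeasurableSpace Ω] {P : Measure Ω}
    [IsProbabilityMeasure P] {X Y : Ω → ℂ} (h : IndepFun X Y P)
    (hX : Measurable X) (hY : Measurable Y) :
    ∫ ω, X ω * Y ω ∂P = (∫ ω, X ω ∂P) * ∫ ω, Y ω ∂P := by
  haveI : IsProbabilityMeasure (P.map X) := Measure.isProbabilityMeasure_map hX.aemeasurable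
  haveI : IsProbabilityMeasure (P.map Y) := Measure.isProbabilityMeasure_map hY.aemeasurable
  have hmap := (indepFun_iff_map_prod_eq_prod_map_map hX.aemeasurable hY.aemeasurable).mp h
  have h1 : ∫ ω, X ω * Y ω ∂P = ∫ p : ℂ × ℂ, p.1 * p.2 ∂(P.map fun ω => (X ω, Y ω)) := by
    rw [integral_map (f := fun p : ℂ × ℂ => p.1 * p.2) (hX.prodMk hY).aemeasurable
      (measurable_fst.mul measurable_snd).aestronglyMeasurable]
  rw [h1, hmap, integral_prod_mul (fun z : ℂ => z) (fun z : ℂ => z)]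
  rw [integral_map (f := fun z : ℂ => z) hX.aemeasurable aestronglyMeasurable_id,
    integral_map (f := fun z : ℂ => z) hY.aemeasurable aestronglyMeasurable_id]

lemma aux_iIndep_integral_prod {Ω : Type*} [MeasurableSpace Ω] {P : Measure Ω}
    [IsProbabilityMeasure P] {X : ℕ → Ω → ℂ}
    (h : iIndepFun X P) (hX : ∀ i, Measurable (X i)) (n : ℕ) :
    ∫ ω, ∏ i ∈ Finset.range n, X i ω ∂P = ∏ i ∈ Finset.range n, ∫ ω, X i ω ∂P := by
  induction n with
  | zero => simp
  | succ n ih =>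
    have hindep := h.indepFun_prod_range_succ hX n
    have hprodmeas : Measurable fun ω => ∏ i ∈ Finset.range n, X i ω :=
      Finset.measurable_prod _ fun i _ => hX i
    have hindep' : IndepFun (fun ω => ∏ i ∈ Finset.range n, X i ω) (X n) P := by
      have : (∏ j ∈ Finset.range n, X j) = fun ω => ∏ i ∈ Finset.range n, X i ω := by
        funext ω; exact Finset.prod_apply ω (Finset.range n) X
      rwa [this] at hindep
    simp_rw [Finset.prod_range_succ]
    rw [aux_indep_integral_mul hindep' hprodmeas (hX n), ih]

/-- Let `(J_i, v_i)` be i.i.d., with `v_i` uniform on the unit sphere `S^{d-1}` and independent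
of `J_i`, and `J_i` Mittag-Leffler distributed (`E[e^{-zJ}] = 1/(1+z^α)` for `Re z ≥ 0`,
`α ∈ (0,1)`).  Then for `λ ≥ 0` and `ξ ∈ ℝ^d`,
`E[exp(n^{-1/α}(-λτ_n + iξ·Y(n)))] → exp(-∫_{S^{d-1}} (λ - iξ·v)^α μ(dv))` as `n → ∞`,
where `τ_n = J_1 + ⋯ + J_n` and `Y(n) = J_1 v_1 + ⋯ + J_n v_n`. -/
theorem coupled_ctrw_fourier_laplace_limit
    {d : ℕ} (hd : 0 < d)
    {Ω : Type*} [MeasurableSpace Ω] (P : Measure Ω) [IsProbabilityMeasure P]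
    (α : ℝ) (hα : α ∈ Set.Ioo (0:ℝ) 1)
    (J : ℕ → Ω → ℝ) (V : ℕ → Ω → EuclideanSpace ℝ (Fin d))
    (μ : Measure (EuclideanSpace ℝ (Fin d))) [IsProbabilityMeasure μ]
    -- `μ` is supported on the unit sphere
    (hμsphere : ∀ᵐ v ∂μ, ‖v‖ = 1)
    (hJmeas : ∀ i, Measurable (J i)) (hVmeas : ∀ i, Measurable (V i))
    (hJnonneg : ∀ i ω, 0 ≤ J i ω)
    -- the pairs `(J_i, v_i)` are i.i.d.
    (hiid : iIndepFun (fun i ω => (J i ω, V i ω)) P)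
    (hident : ∀ i, Measure.map (fun ω => (J i ω, V i ω)) P =
      Measure.map (fun ω => (J 0 ω, V 0 ω)) P)
    -- `v_i` is uniform on the sphere, independent of `J_i`
    (hVdist : ∀ i, Measure.map (V i) P = μ)
    (hJV : ∀ i, IndepFun (J i) (V i) P)
    -- `J_i` is Mittag-Leffler: `E[e^{-zJ}] = 1/(1+z^α)` for `Re z ≥ 0`
    (hJlap : ∀ i, ∀ z : ℂ, 0 ≤ z.re →
      ∫ ω, Complex.exp (-z * (J i ω : ℂ)) ∂P = 1 / (1 + z ^ (α : ℂ))) :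
    ∀ (ξ : EuclideanSpace ℝ (Fin d)) (lam : ℝ), 0 ≤ lam →
      Tendsto (fun n : ℕ =>
          ∫ ω, Complex.exp ((((n : ℝ) ^ (-α⁻¹) : ℝ) : ℂ) *
            (-(lam : ℂ) * ((∑ i ∈ Finset.range n, J i ω : ℝ) : ℂ) +
              Complex.I *
                ((⟪ξ, ∑ i ∈ Finset.range n, J i ω • V i ω⟫ : ℝ) : ℂ))) ∂P)
        atTop
        (nhds (Complex.exp
          (-∫ v, ((lam : ℂ) - Complex.I * ((⟪ξ, v⟫ : ℝ) : ℂ)) ^ (α : ℂ) ∂μ))) := by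
  intro ξ lam hlam
  have hα0 : (0:ℝ) < α := hα.1
  have hα1 : α < 1 := hα.2
  have hαC : (α : ℂ) ≠ 0 := by exact_mod_cast hα0.ne'
  set w : EuclideanSpace ℝ (Fin d) → ℂ :=
    fun v => (lam : ℂ) - Complex.I * ((⟪ξ, v⟫ : ℝ) : ℂ) with hw_def
  have hw_cont : Continuous w :=
    continuous_const.sub (continuous_const.mul
      (Complex.continuous_ofReal.comp (continuous_const.inner continuous_id)))
  have hw_meas : Measurable w := hw_cont.measurable
  have hwre : ∀ v, (w v).re = lam := by
    intro v
    simp [hw_def, Complex.sub_re, Complex.mul_re]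
  have hq_meas : Measurable fun v => w v ^ (α : ℂ) :=
    (aux_measurable_cpow_const hαC).comp hw_meas
  have hqre : ∀ v, 0 ≤ (w v ^ (α : ℂ)).re := fun v =>
    aux_re_cpow_nonneg (by rw [hwre v]; exact hlam) hα0.le hα1.le
  set M : ℝ := (lam + ‖ξ‖) ^ α with hM_def
  have hqbound : ∀ᵐ v ∂μ, ‖w v ^ (α : ℂ)‖ ≤ M := by
    filter_upwards [hμsphere] with v hv
    rw [Complex.norm_cpow_real]
    apply Real.rpow_le_rpow (norm_nonneg _) ?_ hα0.le
    calc ‖w v‖ ≤ ‖(lam:ℂ)‖ + ‖Complex.I * ((⟪ξ, v⟫ : ℝ) : ℂ)‖ := norm_sub_le _ _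
      _ ≤ lam + ‖ξ‖ := by
          rw [norm_mul, Complex.norm_I, one_mul, Complex.norm_real, Complex.norm_real]
          gcongr
          · rw [Real.norm_eq_abs, abs_of_nonneg hlam]
          · rw [Real.norm_eq_abs]
            calc |⟪ξ, v⟫| ≤ ‖ξ‖ * ‖v‖ := abs_real_inner_le_norm ξ v
              _ = ‖ξ‖ := by rw [hv, mul_one]
  have hqint : Integrable (fun v => w v ^ (α : ℂ)) μ :=
    Integrable.mono' (integrable_const M) hq_meas.aestronglyMeasurable hqbound
  set S : ℕ → EuclideanSpace ℝ (Fin d) → ℂ :=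
    fun n v => 1 + (((n:ℝ)⁻¹ : ℝ) : ℂ) * w v ^ (α : ℂ) with hS_def
  have hSre : ∀ n v, 1 ≤ (S n v).re := by
    intro n v
    have : (S n v).re = 1 + (n:ℝ)⁻¹ * (w v ^ (α:ℂ)).re := by
      simp [hS_def, Complex.add_re, Complex.re_ofReal_mul]
    rw [this]
    have : 0 ≤ (n:ℝ)⁻¹ * (w v ^ (α:ℂ)).re :=
      mul_nonneg (by positivity) (hqre v)
    linarith
  have hSne : ∀ n v, S n v ≠ 0 := by
    intro n v h
    have := hSre n v
    rw [h] at this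
    simp at this
    linarith
  have hSnorm : ∀ n v, 1 ≤ ‖S n v‖ := by
    intro n v
    calc (1:ℝ) ≤ (S n v).re := hSre n v
      _ ≤ |(S n v).re| := le_abs_self _
      _ ≤ ‖S n v‖ := Complex.abs_re_le_norm _
  have hSinv : ∀ n v, ‖(S n v)⁻¹‖ ≤ 1 := by
    intro n v
    rw [norm_inv]
    exact inv_le_one_of_one_le₀ (hSnorm n v)
  have hSinv_meas : ∀ n : ℕ, Measurable fun v => (S n v)⁻¹ := by
    intro n
    exact (measurable_const.add (hq_meas.const_mul _)).inv
  set u : ℕ → ℂ := fun n => ∫ v, -(w v ^ (α : ℂ)) * (S n v)⁻¹ ∂μ with hu_def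
  have hu_meas : ∀ n : ℕ, Measurable fun v => -(w v ^ (α : ℂ)) * (S n v)⁻¹ := fun n =>
    hq_meas.neg.mul (hSinv_meas n)
  have hu_bound : ∀ n : ℕ, ∀ᵐ v ∂μ, ‖-(w v ^ (α : ℂ)) * (S n v)⁻¹‖ ≤ M := by
    intro n
    filter_upwards [hqbound] with v hv
    rw [norm_mul, norm_neg]
    calc ‖w v ^ (α:ℂ)‖ * ‖(S n v)⁻¹‖ ≤ M * 1 :=
      mul_le_mul hv (hSinv n v) (norm_nonneg _) (le_trans (norm_nonneg _) hv)
      _ = M := mul_one M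
  have hu_int : ∀ n : ℕ, Integrable (fun v => -(w v ^ (α : ℂ)) * (S n v)⁻¹) μ := fun n =>
    Integrable.mono' (integrable_const M) (hu_meas n).aestronglyMeasurable (hu_bound n)
  have hu : Tendsto u atTop (nhds (-∫ v, w v ^ (α : ℂ) ∂μ)) := by
    rw [← integral_neg]
    apply tendsto_integral_of_dominated_convergence (fun _ => M)
      (fun n => (hu_meas n).aestronglyMeasurable) (integrable_const M) hu_bound
    refine Eventually.of_forall fun v => ?_
    have h0 : Tendsto (fun n : ℕ => (((n:ℝ)⁻¹ : ℝ) : ℂ) * w v ^ (α:ℂ)) atTop (nhds 0) := by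
      have h1 : Tendsto (fun n : ℕ => ((n:ℝ)⁻¹ : ℝ)) atTop (nhds 0) := by
        simpa only [one_div] using
          (tendsto_one_div_atTop_nhds_zero_nat : Tendsto (fun n : ℕ => 1 / (n:ℝ)) atTop (nhds 0))
      have h2 : Tendsto (fun n : ℕ => (((n:ℝ)⁻¹ : ℝ) : ℂ)) atTop (nhds 0) := by
        have := (Complex.continuous_ofReal.tendsto 0).comp h1
        simpa [Function.comp_def] using this
      simpa using h2.mul_const (w v ^ (α:ℂ))
    have hS1 : Tendsto (fun n : ℕ => S n v) atTop (nhds 1) := by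
      have := tendsto_const_nhds.add h0 (f := fun _ : ℕ => (1:ℂ))
      simpa [hS_def] using this
    have hSi : Tendsto (fun n : ℕ => (S n v)⁻¹) atTop (nhds 1) := by
      have := hS1.inv₀ one_ne_zero
      simpa using this
    have := tendsto_const_nhds.mul hSi (f := fun _ : ℕ => -(w v ^ (α:ℂ)))
    simpa using this
  have hFu : ∀ n : ℕ, 1 ≤ n → ∫ v, (S n v)⁻¹ ∂μ = 1 + u n / n := by
    intro n hn
    have hn0 : ((n:ℝ) : ℂ) ≠ 0 := by
      simp only [Complex.ofReal_natCast, ne_eq, Nat.cast_eq_zero]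
      omega
    have hptwise : ∀ v, (S n v)⁻¹ = 1 + (-(w v ^ (α:ℂ)) * (S n v)⁻¹) / n := by
      intro v
      have hSS : S n v * (S n v)⁻¹ = 1 := mul_inv_cancel₀ (hSne n v)
      have hSexp : S n v = 1 + ((n:ℂ))⁻¹ * w v ^ (α:ℂ) := by
        rw [hS_def]
        push_cast
        ring
      rw [hSexp] at hSS ⊢
      linear_combination hSS
    calc ∫ v, (S n v)⁻¹ ∂μ
        = ∫ v, (1 + (-(w v ^ (α:ℂ)) * (S n v)⁻¹) / n) ∂μ := by
          apply integral_congr_ae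
          exact Eventually.of_forall hptwise
      _ = 1 + u n / n := by
          rw [integral_add (integrable_const 1) ((hu_int n).div_const _), integral_div,
            integral_const]
          simp [hu_def]
  -- main identity for n ≥ 1
  have hmain : ∀ n : ℕ, 1 ≤ n →
      ∫ ω, Complex.exp ((((n : ℝ) ^ (-α⁻¹) : ℝ) : ℂ) *
            (-(lam : ℂ) * ((∑ i ∈ Finset.range n, J i ω : ℝ) : ℂ) +
              Complex.I *
                ((⟪ξ, ∑ i ∈ Finset.range n, J i ω • V i ω⟫ : ℝ) : ℂ))) ∂P
        = (∫ v, (S n v)⁻¹ ∂μ) ^ n := by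
    intro n hn
    set c : ℝ := (n:ℝ) ^ (-α⁻¹ : ℝ) with hc_def
    have hnpos : (0:ℝ) < n := by exact_mod_cast hn
    have hc : 0 < c := Real.rpow_pos_of_pos hnpos _
    set gfun : ℝ × EuclideanSpace ℝ (Fin d) → ℂ :=
      fun p => Complex.exp (-((c:ℂ) * w p.2) * ((max p.1 0 : ℝ) : ℂ)) with hg_def
    have hg_meas : Measurable gfun := by
      apply Measurable.cexp
      exact ((measurable_const.mul (hw_meas.comp measurable_snd)).neg).mul
        (Complex.measurable_ofReal.comp (measurable_fst.max measurable_const))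
    have hg_bound : ∀ p : ℝ × EuclideanSpace ℝ (Fin d), ‖gfun p‖ ≤ 1 := by
      intro p
      rw [hg_def]
      simp only [Complex.norm_exp]
      rw [Real.exp_le_one_iff]
      have hre : (-((c:ℂ) * w p.2) * ((max p.1 0 : ℝ) : ℂ)).re
          = -(c * lam) * max p.1 0 := by
        rw [Complex.mul_re]
        simp [Complex.neg_re, Complex.re_ofReal_mul, hwre, Complex.neg_im]
      rw [hre]
      have : 0 ≤ c * lam * max p.1 0 :=
        mul_nonneg (mul_nonneg hc.le hlam) (le_max_right _ _)
      linarith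
    -- rewrite integrand as a product
    have hrw : ∀ ω, Complex.exp ((((n : ℝ) ^ (-α⁻¹) : ℝ) : ℂ) *
            (-(lam : ℂ) * ((∑ i ∈ Finset.range n, J i ω : ℝ) : ℂ) +
              Complex.I *
                ((⟪ξ, ∑ i ∈ Finset.range n, J i ω • V i ω⟫ : ℝ) : ℂ)))
        = ∏ i ∈ Finset.range n, gfun (J i ω, V i ω) := by
      intro ω
      have hinner : ⟪ξ, ∑ i ∈ Finset.range n, J i ω • V i ω⟫
          = ∑ i ∈ Finset.range n, J i ω * ⟪ξ, V i ω⟫ := by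
        rw [inner_sum]
        exact Finset.sum_congr rfl fun i _ => real_inner_smul_right _ _ _
      rw [hinner, hg_def, ← Complex.exp_sum]
      congr 1
      calc ((c : ℝ) : ℂ) *
            (-(lam : ℂ) * ((∑ i ∈ Finset.range n, J i ω : ℝ) : ℂ) +
              Complex.I * ((∑ i ∈ Finset.range n, J i ω * ⟪ξ, V i ω⟫ : ℝ) : ℂ))
          = ∑ i ∈ Finset.range n, ((c : ℝ) : ℂ) *
              (-(lam : ℂ) * ((J i ω : ℝ) : ℂ) +
                Complex.I * (((J i ω : ℝ) : ℂ) * ((⟪ξ, V i ω⟫ : ℝ) : ℂ))) := by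
            push_cast
            rw [Finset.mul_sum, Finset.mul_sum, ← Finset.sum_add_distrib, Finset.mul_sum]
        _ = ∑ i ∈ Finset.range n,
              -((c:ℂ) * w (V i ω)) * ((max (J i ω) 0 : ℝ) : ℂ) := by
            apply Finset.sum_congr rfl
            intro i _
            rw [max_eq_left (hJnonneg i ω), hw_def]
            push_cast
            ring
    refine (integral_congr_ae (Eventually.of_forall hrw)).trans ?_
    -- product of integrals
    have hXmeas : ∀ i : ℕ, Measurable fun ω => gfun (J i ω, V i ω) := fun i =>
      hg_meas.comp ((hJmeas i).prodMk (hVmeas i))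
    have hXindep : iIndepFun
        (fun i ω => gfun (J i ω, V i ω)) P := by
      have := hiid.comp (fun _ => gfun) (fun _ => hg_meas)
      exact this
    rw [aux_iIndep_integral_prod hXindep hXmeas n]
    have hXsame : ∀ i : ℕ, ∫ ω, gfun (J i ω, V i ω) ∂P = ∫ ω, gfun (J 0 ω, V 0 ω) ∂P := by
      intro i
      rw [← integral_map ((hJmeas i).prodMk (hVmeas i)).aemeasurable
          hg_meas.aestronglyMeasurable, hident i,
        integral_map ((hJmeas 0).prodMk (hVmeas 0)).aemeasurable
          hg_meas.aestronglyMeasurable]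
    rw [Finset.prod_congr rfl (fun i _ => hXsame i), Finset.prod_const, Finset.card_range]
    -- compute the single factor
    congr 1
    haveI : IsProbabilityMeasure (P.map (J 0)) :=
      Measure.isProbabilityMeasure_map (hJmeas 0).aemeasurable
    have hjoint : P.map (fun ω => (J 0 ω, V 0 ω)) = (P.map (J 0)).prod μ := by
      rw [(indepFun_iff_map_prod_eq_prod_map_map (hJmeas 0).aemeasurable
        (hVmeas 0).aemeasurable).mp (hJV 0), hVdist 0]
    have hgint : Integrable gfun ((P.map (J 0)).prod μ) :=
      Integrable.mono' (integrable_const 1) hg_meas.aestronglyMeasurable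
        (Eventually.of_forall hg_bound)
    calc ∫ ω, gfun (J 0 ω, V 0 ω) ∂P
        = ∫ p, gfun p ∂((P.map (J 0)).prod μ) := by
          rw [← hjoint, integral_map ((hJmeas 0).prodMk (hVmeas 0)).aemeasurable
            hg_meas.aestronglyMeasurable]
      _ = ∫ v, ∫ j, gfun (j, v) ∂(P.map (J 0)) ∂μ := integral_prod_symm gfun hgint
      _ = ∫ v, (S n v)⁻¹ ∂μ := by
          apply integral_congr_ae
          refine Eventually.of_forall fun v => ?_
          show (∫ j, gfun (j, v) ∂(P.map (J 0))) = (S n v)⁻¹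
          have hzre : (0:ℝ) ≤ ((c:ℂ) * w v).re := by
            rw [Complex.re_ofReal_mul, hwre]
            exact mul_nonneg hc.le hlam
          have hinner1 : ∫ j, gfun (j, v) ∂(P.map (J 0))
              = ∫ ω, Complex.exp (-((c:ℂ) * w v) * ((J 0 ω : ℝ) : ℂ)) ∂P := by
            rw [integral_map (hJmeas 0).aemeasurable]
            · apply integral_congr_ae
              refine Eventually.of_forall fun ω => ?_
              rw [hg_def]
              simp only
              rw [max_eq_left (hJnonneg 0 ω)]
            · exact (hg_meas.comp (measurable_id.prodMk measurable_const)).aestronglyMeasurable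
          rw [hinner1, hJlap 0 ((c:ℂ) * w v) hzre]
          rw [aux_ofReal_mul_cpow hc (w v) hαC]
          have hcα : ((c:ℂ)) ^ (α:ℂ) = (((n:ℝ)⁻¹ : ℝ) : ℂ) := by
            rw [← Complex.ofReal_cpow hc.le]
            congr 1
            rw [hc_def, ← Real.rpow_mul hnpos.le, neg_mul, inv_mul_cancel₀ hα0.ne',
              Real.rpow_neg_one]
          rw [hcα, one_div, hS_def]
  -- conclude
  have hfinal := aux_tendsto_pow_exp hu
  apply hfinal.congr'
  filter_upwards [eventually_ge_atTop 1] with n hn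
  rw [← hFu n hn, ← hmain n hn]
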